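/- Tropical Cramer commutation: Let B be an n×(n+1) matrix over the Puiseux series field with nonzero entries, O = T(B), and A the matrix of principal coefficients. If Δ_{O^i}(A^i) ≠ 0 for every i = 1,…,n+1 (where M^i denotes M with the i-th column deleted), then the homogeneous linear system with coefficient matrix B has a unique projective solution [s_1 : … : s_{n+1}] with all s_i ≠ 0, and its coordinatewise tropicalization equals the point [|O^1|_t : … : |O^{n+1}|_t]. -/

import Mathlib

/-- Tropicalization map on the field of (generalized) Puiseux series
`HahnSeries ℝ ℂ`: `T x = - ord x`. -/
noncomputable def T (x : HahnSeries ℝ ℂ) : ℝ := -x.order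

/-- Principal coefficient: the coefficient of the lowest-order term. -/
noncomputable def Pc (x : HahnSeries ℝ ℂ) : ℂ := x.coeff x.order

/-- Tropical determinant of a real square matrix. -/
noncomputable def tropDet {n : ℕ} (O : Matrix (Fin n) (Fin n) ℝ) : ℝ :=
  Finset.univ.sup' Finset.univ_nonempty (fun σ : Equiv.Perm (Fin n) => ∑ i, O i (σ i))

/-- Pseudo-determinant of `A` with respect to the tropical matrix `O`. -/
noncomputable def pseudoDet {n : ℕ} {R : Type*} [CommRing R]
    (O : Matrix (Fin n) (Fin n) ℝ) (A : Matrix (Fin n) (Fin n) R) : R :=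
  ∑ σ ∈ Finset.univ.filter
      (fun σ : Equiv.Perm (Fin n) => ∑ i, O i (σ i) = tropDet O),
    (Equiv.Perm.sign σ : ℤ) • ∏ i, A i (σ i)

/-- Coefficient extraction as an additive monoid hom. -/
noncomputable def coeffHom (r : ℝ) : HahnSeries ℝ ℂ →+ ℂ where
  toFun x := x.coeff r
  map_zero' := rfl
  map_add' _ _ := HahnSeries.coeff_add

lemma hahn_prod_facts {ι : Type*} (s : Finset ι) (f : ι → HahnSeries ℝ ℂ)
    (hf : ∀ i ∈ s, f i ≠ 0) :
    (∏ i ∈ s, f i) ≠ 0 ∧ (∏ i ∈ s, f i).order = ∑ i ∈ s, (f i).order ∧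
      (∏ i ∈ s, f i).coeff (∑ i ∈ s, (f i).order) = ∏ i ∈ s, Pc (f i) := by
  induction s using Finset.cons_induction with
  | empty =>
      refine ⟨one_ne_zero, ?_, ?_⟩ <;>
        simp [HahnSeries.order_one, HahnSeries.coeff_one]
  | cons a s ha ih =>
      obtain ⟨h0, hord, hc⟩ := ih (fun i hi => hf i (Finset.mem_cons_of_mem hi))
      have ha0 : f a ≠ 0 := hf a (Finset.mem_cons_self a s)
      rw [Finset.prod_cons, Finset.sum_cons, Finset.prod_cons]
      refine ⟨mul_ne_zero ha0 h0, ?_, ?_⟩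
      · rw [HahnSeries.order_mul ha0 h0, hord]
      · have key := HahnSeries.coeff_mul_order_add_order (f a) (∏ i ∈ s, f i)
        rw [HahnSeries.leadingCoeff_eq, HahnSeries.leadingCoeff_eq, hord, hc] at key
        rw [key]
        rfl

lemma det_facts {m : ℕ} (M : Matrix (Fin m) (Fin m) (HahnSeries ℝ ℂ)) (hM : ∀ i j, M i j ≠ 0)
    (O' : Matrix (Fin m) (Fin m) ℝ) (hO' : ∀ i j, O' i j = T (M i j))
    (A' : Matrix (Fin m) (Fin m) ℂ) (hA' : ∀ i j, A' i j = Pc (M i j))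
    (hΔ : pseudoDet O' A' ≠ 0) :
    M.det ≠ 0 ∧ M.det.order = - tropDet O' := by
  set D := tropDet O' with hD
  have hord_entry : ∀ i j, (M i j).order = -(O' i j) := by
    intro i j; rw [hO' i j]; simp [T]
  have hP : ∀ σ : Equiv.Perm (Fin m),
      (∏ i, M i (σ i)) ≠ 0 ∧ (∏ i, M i (σ i)).order = -(∑ i, O' i (σ i)) ∧
        (∏ i, M i (σ i)).coeff (-(∑ i, O' i (σ i))) = ∏ i, A' i (σ i) := by
    intro σ
    obtain ⟨h0, hord, hc⟩ := hahn_prod_facts Finset.univ (fun i => M i (σ i))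
      (fun i _ => hM i (σ i))
    have hsum : ∑ i, (M i (σ i)).order = -(∑ i, O' i (σ i)) := by
      rw [← Finset.sum_neg_distrib]
      exact Finset.sum_congr rfl fun i _ => by rw [hord_entry]
    refine ⟨h0, by rw [hord, hsum], ?_⟩
    rw [← hsum, hc]
    exact Finset.prod_congr rfl fun i _ => (hA' i (σ i)).symm
  have hwle : ∀ σ : Equiv.Perm (Fin m), ∑ i, O' i (σ i) ≤ D := by
    intro σ
    rw [hD, tropDet]
    exact Finset.le_sup' (fun σ : Equiv.Perm (Fin m) => ∑ i, O' i (σ i)) (Finset.mem_univ σ)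
  have hdet : M.det = ∑ σ : Equiv.Perm (Fin m),
      ((Equiv.Perm.sign σ : ℤ) : ℤ) • ∏ i, M i (σ i) := by
    rw [← Matrix.det_transpose, Matrix.det_apply]
    exact Finset.sum_congr rfl fun σ _ => by
      rw [Units.smul_def]; rfl
  have hcoeff : ∀ r : ℝ, M.det.coeff r =
      ∑ σ : Equiv.Perm (Fin m), (Equiv.Perm.sign σ : ℤ) • (∏ i, M i (σ i)).coeff r := by
    intro r
    have : M.det.coeff r = coeffHom r M.det := rfl
    rw [this, hdet, map_sum]
    exact Finset.sum_congr rfl fun σ _ => by rw [map_zsmul]; rfl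
  have hc1 : M.det.coeff (-D) = pseudoDet O' A' := by
    rw [hcoeff, pseudoDet]
    rw [← Finset.sum_filter_add_sum_filter_not Finset.univ
      (fun σ : Equiv.Perm (Fin m) => ∑ i, O' i (σ i) = D)]
    have h2 : ∑ σ ∈ Finset.univ.filter
        (fun σ : Equiv.Perm (Fin m) => ¬ ∑ i, O' i (σ i) = D),
        (Equiv.Perm.sign σ : ℤ) • (∏ i, M i (σ i)).coeff (-D) = 0 := by
      refine Finset.sum_eq_zero fun σ hσ => ?_
      have hne := (Finset.mem_filter.mp hσ).2
      have hlt : -D < (∏ i, M i (σ i)).order := by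
        rw [(hP σ).2.1]
        exact neg_lt_neg (lt_of_le_of_ne (hwle σ) hne)
      rw [HahnSeries.coeff_eq_zero_of_lt_order hlt, smul_zero]
    rw [h2, add_zero]
    refine Finset.sum_congr rfl fun σ hσ => ?_
    have heq := (Finset.mem_filter.mp hσ).2
    have hDe : -D = -(∑ i, O' i (σ i)) := by rw [heq, hD]
    rw [hDe, (hP σ).2.2]
  have hc2 : ∀ r : ℝ, r < -D → M.det.coeff r = 0 := by
    intro r hr
    rw [hcoeff]
    refine Finset.sum_eq_zero fun σ _ => ?_
    have hlt : r < (∏ i, M i (σ i)).order := by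
      rw [(hP σ).2.1]
      exact lt_of_lt_of_le hr (neg_le_neg (hwle σ))
    rw [HahnSeries.coeff_eq_zero_of_lt_order hlt, smul_zero]
  have hne : M.det ≠ 0 := by
    intro h
    apply hΔ
    rw [← hc1, h, HahnSeries.coeff_zero]
  refine ⟨hne, ?_⟩
  have hle : M.det.order ≤ -D := HahnSeries.order_le_of_coeff_ne_zero (hc1 ▸ hΔ)
  rcases lt_or_eq_of_le hle with h | h
  · exact absurd (hc2 _ h) (HahnSeries.coeff_order_eq_zero.not.2 hne)
  · exact h

theorem tropical_cramer {n : ℕ}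
    (B : Matrix (Fin n) (Fin (n + 1)) (HahnSeries ℝ ℂ)) (hB : ∀ i j, B i j ≠ 0)
    (O : Matrix (Fin n) (Fin (n + 1)) ℝ) (hO : ∀ i j, O i j = T (B i j))
    (A : Matrix (Fin n) (Fin (n + 1)) ℂ) (hA : ∀ i j, A i j = Pc (B i j))
    (hΔ : ∀ i : Fin (n + 1),
      pseudoDet (O.submatrix id i.succAbove) (A.submatrix id i.succAbove) ≠ 0) :
    ∃ s : Fin (n + 1) → HahnSeries ℝ ℂ,
      (∀ i, s i ≠ 0) ∧
      B.mulVec s = 0 ∧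
      (∀ s' : Fin (n + 1) → HahnSeries ℝ ℂ, B.mulVec s' = 0 →
        ∃ c : HahnSeries ℝ ℂ, s' = c • s) ∧
      ∃ lam : ℝ, ∀ i : Fin (n + 1),
        T (s i) = tropDet (O.submatrix id i.succAbove) + lam := by
  have hdf : ∀ i : Fin (n + 1),
      (B.submatrix id i.succAbove).det ≠ 0 ∧
        (B.submatrix id i.succAbove).det.order = - tropDet (O.submatrix id i.succAbove) :=
    fun i => det_facts _ (fun a b => hB a _) _ (fun a b => hO a _) _ (fun a b => hA a _) (hΔ i)
  set s : Fin (n + 1) → HahnSeries ℝ ℂ :=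
    fun i => (-1 : HahnSeries ℝ ℂ) ^ (i : ℕ) * (B.submatrix id i.succAbove).det with hs
  have hsne : ∀ i, s i ≠ 0 := fun i =>
    mul_ne_zero (pow_ne_zero _ (neg_ne_zero.mpr one_ne_zero)) (hdf i).1
  have hmv : B.mulVec s = 0 := by
    funext i
    set C : Matrix (Fin (n + 1)) (Fin (n + 1)) (HahnSeries ℝ ℂ) :=
      Matrix.of (Fin.cons (B i) B) with hCdef
    have hC0 : C.det = 0 := by
      apply Matrix.det_zero_of_row_eq (i := 0) (j := i.succ) (Fin.succ_ne_zero i).symm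
      funext k
      simp [hCdef, Fin.cons_succ, Fin.cons_zero]
      rfl
    have hexp := Matrix.det_succ_row_zero C
    have hsub : ∀ j : Fin (n + 1), (C.submatrix Fin.succ j.succAbove) =
        B.submatrix id j.succAbove := by
      intro j; ext a b; simp [hCdef, Fin.cons_succ]
      rfl
    rw [hC0] at hexp
    have : B.mulVec s i = ∑ j : Fin (n + 1),
        (-1) ^ (j : ℕ) * C 0 j * (C.submatrix Fin.succ j.succAbove).det := by
      rw [Matrix.mulVec, dotProduct]
      refine Finset.sum_congr rfl fun j _ => ?_
      rw [hsub j, show C 0 j = B i j from rfl]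
      simp only [hs, hCdef, Matrix.of_apply, Fin.cons_zero]
      ring
    rw [this, ← hexp]
    rfl
  refine ⟨s, hsne, hmv, ?_, 0, ?_⟩
  · intro s' hs'
    set p : Fin (n + 1) := 0 with hp
    set M : Matrix (Fin n) (Fin n) (HahnSeries ℝ ℂ) := B.submatrix id p.succAbove with hM
    have hdet : M.det ≠ 0 := (hdf p).1
    have hdetU : IsUnit M.det := isUnit_iff_ne_zero.mpr hdet
    have key : ∀ t : Fin (n + 1) → HahnSeries ℝ ℂ, B.mulVec t = 0 →
        ∀ a : Fin n, ∑ j, M a j * t (p.succAbove j) = -(B a p * t p) := by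
      intro t ht a
      have := congrFun ht a
      rw [Matrix.mulVec, dotProduct] at this
      rw [Fin.sum_univ_succAbove (fun k => B a k * t k) p] at this
      simp only [Pi.zero_apply] at this
      simp only [hM, Matrix.submatrix_apply, id_eq]
      linear_combination this
    set v : Fin n → HahnSeries ℝ ℂ :=
      fun j => s p * s' (p.succAbove j) - s' p * s (p.succAbove j) with hv
    have hMv : M.mulVec v = 0 := by
      funext a
      rw [Matrix.mulVec, dotProduct]
      simp only [hv, Pi.zero_apply]
      have e1 := key s' hs' a
      have e2 := key s hmv a
      calc ∑ j, M a j * (s p * s' (p.succAbove j) - s' p * s (p.succAbove j))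
          = s p * (∑ j, M a j * s' (p.succAbove j))
            - s' p * (∑ j, M a j * s (p.succAbove j)) := by
            rw [Finset.mul_sum, Finset.mul_sum, ← Finset.sum_sub_distrib]
            exact Finset.sum_congr rfl fun j _ => by ring
        _ = 0 := by rw [e1, e2]; ring
    have hv0 : v = 0 := by
      have : M⁻¹.mulVec (M.mulVec v) = v := by
        rw [Matrix.mulVec_mulVec, Matrix.nonsing_inv_mul M hdetU, Matrix.one_mulVec]
      rw [hMv, Matrix.mulVec_zero] at this
      exact this.symm
    have hprop : ∀ k, s p * s' k = s' p * s k := by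
      intro k
      induction k using Fin.cases with
      | zero => ring
      | succ j =>
          have := congrFun hv0 j
          simp only [hv, Pi.zero_apply, hp, Fin.succAbove_zero] at this
          exact sub_eq_zero.mp this
    refine ⟨s' p * (s p)⁻¹, ?_⟩
    funext k
    have h1 := hprop k
    have hsp : s p ≠ 0 := hsne p
    show s' k = s' p * (s p)⁻¹ * s k
    rw [mul_comm (s' p), mul_assoc, ← h1, ← mul_assoc, inv_mul_cancel₀ hsp, one_mul]
  · intro i
    have hord : (s i).order = (B.submatrix id i.succAbove).det.order := by
      simp only [hs]
      rcases Nat.even_or_odd (i : ℕ) with h | h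
      · rw [Even.neg_one_pow (α := HahnSeries ℝ ℂ) h, one_mul]
      · rw [Odd.neg_one_pow (α := HahnSeries ℝ ℂ) h, neg_one_mul, HahnSeries.order_neg]
    rw [T, hord, (hdf i).2, add_zero, neg_neg]
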